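/- Let (K, v) be an ordered valued field, P ∈ K[X] of degree d ≥ 1, and a < b in K. Let σ₀,…,σ_d ∈ {−1,+1} satisfy σ_k · P^[k](a) ≥ 0 and σ_k · P^[k](b) ≥ 0 for k = 0,…,d−1, and σ_d · (leading coefficient of P) > 0. With a_k, ν_k (0 ≤ k ≤ d) and δ = v(b − a) defined as follows: ε_k = σ₀σ_k, a_k = a if ε_k ε_{k+1} = 1 and a_k = b if ε_k ε_{k+1} = −1 (for 0 ≤ k ≤ d−1), ν_k = v(P^[k](a_k)) for 0 ≤ k ≤ d−1 and ν_d = v(leading coefficient of P). Then for every x ∈ K with a < x < b such that v(x − a) = v(b − x) = v(b − a), one has v(P(x)) = min( ν₀, ν₁ + δ, ν₂ + 2δ, …, ν_d + dδ ). -/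

import Mathlib

/-- An ordered valuation on a linearly ordered field `K`: an additively-written valuation
`v : K → Γ ∪ {∞}` compatible with the order. -/
def IsOrderedValuation {K Γ : Type*} [Field K] [LinearOrder K] [IsStrictOrderedRing K]
    [AddCommGroup Γ] [LinearOrder Γ] [IsOrderedAddMonoid Γ] (v : K → WithTop Γ) : Prop :=
  (∀ x, v x = ⊤ ↔ x = 0) ∧
  (∀ x y, v (x * y) = v x + v y) ∧
  (∀ x y, min (v x) (v y) ≤ v (x + y)) ∧
  (∀ x y : K, 0 ≤ x → x ≤ y → v y ≤ v x)

open Polynomial Finset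

section
variable {K Γ : Type*} [Field K] [LinearOrder K] [IsStrictOrderedRing K] [AddCommGroup Γ] [LinearOrder Γ] [IsOrderedAddMonoid Γ]
  {v : K → WithTop Γ}

structure IOV (v : K → WithTop Γ) : Prop where
  h0 : ∀ x : K, v x = ⊤ ↔ x = 0
  hm : ∀ x y, v (x*y) = v x + v y
  ha : ∀ x y, min (v x) (v y) ≤ v (x+y)
  hc : ∀ x y : K, 0 ≤ x → x ≤ y → v y ≤ v x

theorem IOV.v_one (H : IOV v) : v 1 = 0 := by
  have h := H.hm 1 1
  rw [mul_one] at h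
  have hne : v 1 ≠ ⊤ := fun hh => absurd ((H.h0 1).1 hh) one_ne_zero
  obtain ⟨g, hA⟩ := WithTop.ne_top_iff_exists.mp hne
  rw [← hA, ← WithTop.coe_add, WithTop.coe_inj, left_eq_add] at h
  rw [← hA, h]; rfl

theorem IOV.v_neg (H : IOV v) (y : K) : v (-y) = v y := by
  have h1 : v ((-1 : K) * (-1)) = v (-1) + v (-1) := H.hm _ _
  rw [neg_one_mul, neg_neg, H.v_one] at h1
  have hne : v (-1 : K) ≠ ⊤ := fun hh => by
    have := (H.h0 (-1)).1 hh; norm_num at this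
  obtain ⟨g, hA⟩ := WithTop.ne_top_iff_exists.mp hne
  rw [← hA, ← WithTop.coe_add] at h1
  rw [show (0:WithTop Γ) = ((0:Γ):WithTop Γ) from rfl, WithTop.coe_inj] at h1
  have : g = 0 := by
    have h2 : g + g = 0 := h1.symm
    rcases lt_trichotomy g 0 with hlt|he|hgt
    · have h3 := add_lt_add hlt hlt
      rw [h2, add_zero] at h3; exact absurd h3 (lt_irrefl _)
    · exact he
    · have h3 := add_lt_add hgt hgt
      rw [h2, zero_add] at h3; exact absurd h3 (lt_irrefl _)
  have hv1 : v (-1 : K) = 0 := by rw [← hA, this]; rfl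
  have h2 := H.hm (-1) y
  rw [neg_one_mul, hv1, zero_add] at h2
  exact h2

theorem IOV.v_add_nonneg (H : IOV v) {x y : K} (hx : 0 ≤ x) (hy : 0 ≤ y) :
    v (x + y) = min (v x) (v y) := by
  refine le_antisymm ?_ (H.ha x y)
  exact le_min (H.hc x (x+y) hx (by linarith)) (H.hc y (x+y) hy (by linarith))

theorem IOV.v_sum_nonneg (H : IOV v) (t : ℕ → K) :
    ∀ n : ℕ, (∀ k < n, 0 ≤ t k) → v (∑ k ∈ range n, t k) = (range n).inf (fun k => v (t k)) := by
  intro n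
  induction n with
  | zero => intro _; simp [(H.h0 0).2 rfl]
  | succ n ih =>
    intro hn
    rw [Finset.sum_range_succ, Finset.range_add_one, Finset.inf_insert,
      ← ih (fun k hk => hn k (by omega)),
      H.v_add_nonneg (Finset.sum_nonneg fun k hk => hn k (by simp at hk; omega)) (hn n (by omega)),
      min_comm]

end



section
variable {K : Type*} [Field K] [LinearOrder K] [IsStrictOrderedRing K]

theorem hd_linear_mul (r : K) (q : K[X]) (j : ℕ) :
    hasseDeriv (j+1) ((X - C r) * q) =
      (X - C r) * hasseDeriv (j+1) q + hasseDeriv j q := by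
  rw [hasseDeriv_mul]
  rw [Finset.Nat.sum_antidiagonal_eq_sum_range_succ_mk]
  rw [Finset.sum_range_succ']
  rw [Finset.sum_range_succ']
  have h2 : ∀ k : ℕ, hasseDeriv (k+2) (X - C r : K[X]) = 0 := by
    intro k
    rw [map_sub, hasseDeriv_X (k := k+2) (by omega), hasseDeriv_C (k := k+2) r (by omega), sub_zero]
  have h1 : hasseDeriv 1 (X - C r : K[X]) = 1 := by
    rw [hasseDeriv_one', derivative_sub, derivative_X, derivative_C, sub_zero]
  have h0 : hasseDeriv 0 (X - C r : K[X]) = X - C r := hasseDeriv_zero' _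
  simp only [h2, zero_mul, Finset.sum_const_zero, zero_add, h1, one_mul, h0]
  rw [Nat.add_sub_cancel]
  simp only [Nat.sub_zero]
  ring

theorem hd_eval_rel {p q : K[X]} {r c : K} (hp : p = (X - C r) * q + C c)
    (j : ℕ) (y : K) :
    (hasseDeriv (j+1) p).eval y =
      (y - r) * ((hasseDeriv (j+1) q).eval y) + (hasseDeriv j q).eval y := by
  rw [hp, map_add, hasseDeriv_C (k := j+1) c (by omega), add_zero, hd_linear_mul]
  simp [eval_mul]

theorem hd_top_eq_C {p : K[X]} {e : ℕ} (h : p.natDegree ≤ e) :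
    hasseDeriv e p = C (p.coeff e) := by
  ext n
  rw [hasseDeriv_coeff, coeff_C]
  rcases Nat.eq_zero_or_pos n with h0 | h0
  · subst h0; simp
  · rw [if_neg (by omega), coeff_eq_zero_of_natDegree_lt (by omega), mul_zero]

/-- The successive quotients by `X - aa k`. -/
noncomputable def Qseq (P : K[X]) (aa : ℕ → K) : ℕ → K[X]
  | 0 => P
  | k+1 => Qseq P aa k /ₘ (X - C (aa k))

theorem Qseq_rel (P : K[X]) (aa : ℕ → K) (k : ℕ) :
    Qseq P aa k = (X - C (aa k)) * Qseq P aa (k+1) +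
      C ((Qseq P aa k).eval (aa k)) := by
  conv_lhs => rw [← modByMonic_add_div (Qseq P aa k) (X - C (aa k))]
  rw [modByMonic_X_sub_C_eq_C_eval]
  show C _ + _ = _
  rw [add_comm]
  rfl

theorem Qseq_fact (P : K[X]) (aa : ℕ → K) {d : ℕ} (hdeg : P.natDegree = d)
    (hlc : P.leadingCoeff ≠ 0) :
    ∀ k ≤ d, (Qseq P aa k).natDegree = d - k ∧
      (Qseq P aa k).leadingCoeff = P.leadingCoeff := by
  intro k
  induction k with
  | zero => intro _; exact ⟨by simpa [Qseq] using hdeg, rfl⟩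
  | succ k ih =>
    intro hk
    obtain ⟨hd1, hd2⟩ := ih (by omega)
    constructor
    · show (Qseq P aa k /ₘ (X - C (aa k))).natDegree = d - (k+1)
      rw [natDegree_divByMonic _ (monic_X_sub_C (aa k)), hd1, natDegree_X_sub_C]
      omega
    · show (Qseq P aa k /ₘ (X - C (aa k))).leadingCoeff = _
      rw [leadingCoeff_divByMonic_X_sub_C, hd2]
      have hne : Qseq P aa k ≠ 0 := by
        intro h; rw [h] at hd2; simp [leadingCoeff_zero] at hd2; exact hlc hd2.symm
      rw [degree_eq_natDegree hne, hd1]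
      intro h
      have : d - k = 0 := by exact_mod_cast h
      omega

theorem Qseq_top (P : K[X]) (aa : ℕ → K) {d : ℕ} (hdeg : P.natDegree = d)
    (hlc : P.leadingCoeff ≠ 0) {k : ℕ} (hk : k ≤ d) :
    hasseDeriv (d - k) (Qseq P aa k) = C P.leadingCoeff := by
  obtain ⟨h1, h2⟩ := Qseq_fact P aa hdeg hlc k hk
  rw [hd_top_eq_C (le_of_eq h1), ← h2, ← h1, coeff_natDegree]

/-- The level-`n` chain of divided-difference-like values. -/
noncomputable def Vc (P : K[X]) (aa : ℕ → K) (a b : K) (n i : ℕ) : K :=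
  if i ≤ n then (hasseDeriv (n - i) (Qseq P aa i)).eval a
  else (hasseDeriv (i - (n+1)) (Qseq P aa (2*n+1-i))).eval b

theorem Vc_start (P : K[X]) (aa : ℕ → K) (a b : K) (n : ℕ) :
    Vc P aa a b n 0 = (hasseDeriv n P).eval a := by
  simp [Vc, Qseq]

theorem Vc_end (P : K[X]) (aa : ℕ → K) (a b : K) (n : ℕ) :
    Vc P aa a b n (2*n+1) = (hasseDeriv n P).eval b := by
  have h : ¬ (2*n+1 ≤ n) := by omega
  simp only [Vc, if_neg h]
  have h1 : 2*n+1 - (n+1) = n := by omega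
  have h2 : 2*n+1 - (2*n+1) = 0 := by omega
  rw [h1, h2]
  rfl

theorem Vc_step (P : K[X]) (aa : ℕ → K) (a b : K)
    (haa : ∀ k, aa k = a ∨ aa k = b) {n i : ℕ} (hi : i < 2*n+1) :
    ∃ u, Vc P aa a b n (i+1) = Vc P aa a b n i + (b - a) * u ∧
      (u = 0 ∨ ∃ i' ≤ 2*(n+1)+1, u = Vc P aa a b (n+1) i') := by
  rcases lt_trichotomy i n with hlt | heq | hgt
  · -- A-side step
    have e1 : Vc P aa a b n i = (hasseDeriv (n-i) (Qseq P aa i)).eval a := by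
      rw [Vc, if_pos (by omega)]
    have e2 : Vc P aa a b n (i+1) = (hasseDeriv (n-i-1) (Qseq P aa (i+1))).eval a := by
      rw [Vc, if_pos (by omega), show n - (i+1) = n-i-1 from by omega]
    have e3 : Vc P aa a b (n+1) (i+1) = (hasseDeriv (n-i) (Qseq P aa (i+1))).eval a := by
      rw [Vc, if_pos (by omega), show n+1 - (i+1) = n-i from by omega]
    have hrel := hd_eval_rel (Qseq_rel P aa i) (n-i-1) a
    rw [show n-i-1+1 = n-i from by omega] at hrel
    rcases haa i with h | h
    · refine ⟨0, ?_, Or.inl rfl⟩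
      rw [e1, e2, hrel, h]
      ring
    · refine ⟨(hasseDeriv (n-i) (Qseq P aa (i+1))).eval a, ?_, Or.inr ⟨i+1, by omega, e3.symm⟩⟩
      rw [e1, e2, hrel, h]
      ring
  · -- bridge
    subst heq
    have e1 : Vc P aa a b i i = (Qseq P aa i).eval a := by
      rw [Vc, if_pos (le_refl i), Nat.sub_self, hasseDeriv_zero']
    have e2 : Vc P aa a b i (i+1) = (Qseq P aa i).eval b := by
      rw [Vc, if_neg (by omega), show i+1-(i+1) = 0 from by omega,
        show 2*i+1-(i+1) = i from by omega, hasseDeriv_zero']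
    have ha' : (Qseq P aa i).eval a = (a - aa i) * (Qseq P aa (i+1)).eval a
        + (Qseq P aa i).eval (aa i) := by
      conv_lhs => rw [Qseq_rel P aa i]
      simp
    have hb' : (Qseq P aa i).eval b = (b - aa i) * (Qseq P aa (i+1)).eval b
        + (Qseq P aa i).eval (aa i) := by
      conv_lhs => rw [Qseq_rel P aa i]
      simp
    have eA : Vc P aa a b (i+1) (i+1) = (Qseq P aa (i+1)).eval a := by
      rw [Vc, if_pos (le_refl _), Nat.sub_self, hasseDeriv_zero']
    have eB : Vc P aa a b (i+1) (i+2) = (Qseq P aa (i+1)).eval b := by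
      rw [Vc, if_neg (by omega), show i+2-(i+1+1) = 0 from by omega,
        show 2*(i+1)+1-(i+2) = i+1 from by omega, hasseDeriv_zero']
    rcases haa i with h | h
    · refine ⟨(Qseq P aa (i+1)).eval b, ?_, Or.inr ⟨i+2, by omega, eB.symm⟩⟩
      rw [e1, e2, ha', hb', h]
      ring
    · refine ⟨(Qseq P aa (i+1)).eval a, ?_, Or.inr ⟨i+1, by omega, eA.symm⟩⟩
      rw [e1, e2, ha', hb', h]
      ring
  · -- B-side step
    have hk' : i ≤ 2*n := by omega
    set k := 2*n - i with hk
    have e1 : Vc P aa a b n i = (hasseDeriv (n-k-1) (Qseq P aa (k+1))).eval b := by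
      rw [Vc, if_neg (by omega), show i - (n+1) = n-k-1 from by omega,
        show 2*n+1-i = k+1 from by omega]
    have e2 : Vc P aa a b n (i+1) = (hasseDeriv (n-k) (Qseq P aa k)).eval b := by
      rw [Vc, if_neg (by omega), show i+1 - (n+1) = n-k from by omega,
        show 2*n+1-(i+1) = k from by omega]
    have e3 : Vc P aa a b (n+1) (i+2) = (hasseDeriv (n-k) (Qseq P aa (k+1))).eval b := by
      rw [Vc, if_neg (by omega), show i+2 - (n+1+1) = n-k from by omega,
        show 2*(n+1)+1-(i+2) = k+1 from by omega]
    have hrel := hd_eval_rel (Qseq_rel P aa k) (n-k-1) b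
    rw [show n-k-1+1 = n-k from by omega] at hrel
    rcases haa k with h | h
    · refine ⟨(hasseDeriv (n-k) (Qseq P aa (k+1))).eval b, ?_, Or.inr ⟨i+2, by omega, e3.symm⟩⟩
      rw [e1, e2, hrel, h]
      ring
    · refine ⟨0, ?_, Or.inl rfl⟩
      rw [e1, e2, hrel, h]
      ring

end



section
variable {Γ : Type*} [AddCommGroup Γ] [LinearOrder Γ] [IsOrderedAddMonoid Γ]

theorem wt_add_min (c x y : WithTop Γ) : c + min x y = min (c+x) (c+y) := by
  rcases le_total x y with h | h
  · rw [min_eq_left h, min_eq_left (add_le_add_right h c)]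
  · rw [min_eq_right h, min_eq_right (add_le_add_right h c)]

theorem wt_inf_add (s : Finset ℕ) (f : ℕ → WithTop Γ) (c : WithTop Γ) :
    s.inf (fun j => c + f j) = c + s.inf f := by
  induction s using Finset.induction_on with
  | empty => simp
  | insert _ _ h ih => rw [Finset.inf_insert, Finset.inf_insert, ih, wt_add_min]

theorem wt_inf_add' (s : Finset ℕ) (f : ℕ → WithTop Γ) (c : WithTop Γ) :
    s.inf (fun j => f j + c) = s.inf f + c := by
  rw [add_comm _ c, ← wt_inf_add]
  exact Finset.inf_congr rfl (fun j _ => add_comm _ _)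

end

section
variable {K Γ : Type*} [Field K] [LinearOrder K] [IsStrictOrderedRing K] [AddCommGroup Γ] [LinearOrder Γ] [IsOrderedAddMonoid Γ]

/-- endpoint choice -/
noncomputable def aaF (σ : ℕ → ℤ) (a b : K) : ℕ → K := fun k =>
  if σ k * σ (k+1) = 1 then a else b

/-- the `ν` values -/
noncomputable def nuF (v : K → WithTop Γ) (P : K[X]) (σ : ℕ → ℤ) (a b : K) (d : ℕ) :
    ℕ → WithTop Γ := fun j =>
  if j = d then v P.leadingCoeff else v ((hasseDeriv j P).eval (aaF σ a b j))

/-- partial minima -/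
noncomputable def mF (v : K → WithTop Γ) (P : K[X]) (σ : ℕ → ℤ) (a b : K) (d : ℕ) :
    ℕ → WithTop Γ := fun n =>
  (Finset.Icc n d).inf (fun j => nuF v P σ a b d j + (j - n) • v (b - a))

variable (v : K → WithTop Γ) (P : K[X]) (σ : ℕ → ℤ) (a b : K) (d : ℕ)

theorem mF_last : mF v P σ a b d d = nuF v P σ a b d d := by
  rw [mF, Finset.Icc_self, Finset.inf_singleton, Nat.sub_self, zero_smul, add_zero]

theorem mF_rec {n : ℕ} (hn : n < d) :
    mF v P σ a b d n = min (nuF v P σ a b d n)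
      (v (b - a) + mF v P σ a b d (n+1)) := by
  have hIcc : Finset.Icc n d = insert n (Finset.Icc (n+1) d) := by
    ext j; simp only [Finset.mem_Icc, Finset.mem_insert]; omega
  rw [mF, hIcc, Finset.inf_insert, Nat.sub_self, zero_smul, add_zero]
  congr 1
  rw [show ((Finset.Icc (n+1) d).inf fun j => nuF v P σ a b d j + (j - n) • v (b-a))
      = (Finset.Icc (n+1) d).inf fun j => v (b-a) + (nuF v P σ a b d j + (j - (n+1)) • v (b-a)) from ?_,
    wt_inf_add]
  · rfl
  · refine Finset.inf_congr rfl (fun j hj => ?_)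
    rw [Finset.mem_Icc] at hj
    rw [show j - n = (j - (n+1)) + 1 from by omega, add_nsmul, one_nsmul]
    abel

theorem mF_le {k : ℕ} (hk : k ≤ d) :
    mF v P σ a b d 0 ≤ mF v P σ a b d k + k • v (b - a) := by
  rw [mF, mF, ← wt_inf_add']
  refine le_trans (Finset.inf_mono (Finset.Icc_subset_Icc_left (Nat.zero_le k))) ?_
  refine le_of_eq (Finset.inf_congr rfl (fun j hj => ?_))
  rw [Finset.mem_Icc] at hj
  rw [Nat.sub_zero, add_assoc, ← add_nsmul]
  congr 2
  omega

theorem mF_zero_eq : mF v P σ a b d 0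
    = (Finset.range (d+1)).inf (fun j => nuF v P σ a b d j + j • v (b - a)) := by
  rw [mF]
  have : Finset.Icc 0 d = Finset.range (d+1) := by
    ext j; simp only [Finset.mem_Icc, Finset.mem_range]; omega
  rw [this]
  exact Finset.inf_congr rfl (fun j _ => by rw [Nat.sub_zero])

end

section
variable {K Γ : Type*} [Field K] [LinearOrder K] [IsStrictOrderedRing K] [AddCommGroup Γ] [LinearOrder Γ] [IsOrderedAddMonoid Γ]
  {v : K → WithTop Γ}

theorem IOV.v_sign (H : IOV v) {s : K} (hs : s = 1 ∨ s = -1) (y : K) :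
    v (s * y) = v y := by
  rcases hs with rfl | rfl
  · rw [one_mul]
  · rw [neg_one_mul, H.v_neg]

theorem chain_mono (V : ℕ → K) (L : ℕ)
    (hstep : ∀ i < L, ∃ u, V (i+1) = V i + u ∧ 0 ≤ u) :
    ∀ j ≤ L, ∀ i ≤ j, V i ≤ V j := by
  intro j
  induction j with
  | zero => intro _ i hi; rw [Nat.le_zero.mp hi]
  | succ j ihj =>
    intro hj i hi
    obtain ⟨u, he, hu⟩ := hstep j (by omega)
    rcases Nat.lt_or_ge i (j+1) with h | h
    · refine le_trans (ihj (by omega) i (by omega)) ?_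
      rw [he]; linarith
    · rw [show i = j+1 from by omega]

theorem chain_sign (V : ℕ → K) (L : ℕ) (s s' : K)
    (hs : s = 1 ∨ s = -1) (hs' : s' = 1 ∨ s' = -1)
    (hstep : ∀ i < L, ∃ u, V (i+1) = V i + u ∧ 0 ≤ s' * u)
    (h0 : 0 ≤ s * V 0) (hL : 0 ≤ s * V L) : ∀ i ≤ L, 0 ≤ s * V i := by
  intro i hi
  rcases hs' with rfl | rfl
  · have mono := chain_mono V L (fun i hi => by
      obtain ⟨u, he, hu⟩ := hstep i hi
      exact ⟨u, he, by linarith⟩)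
    rcases hs with rfl | rfl
    · have := mono i hi 0 (by omega); rw [one_mul] at *; linarith
    · have := mono L (le_refl L) i hi
      rw [neg_one_mul] at *; linarith
  · have mono := chain_mono (fun i => -V i) L (fun i hi => by
      obtain ⟨u, he, hu⟩ := hstep i hi
      exact ⟨-u, by show -V (i+1) = -V i + -u; rw [he]; ring, by linarith⟩)
    rcases hs with rfl | rfl
    · have := mono L (le_refl L) i hi
      rw [one_mul] at *; linarith
    · have := mono i hi 0 (by omega)
      rw [neg_one_mul] at *; linarith

theorem chain_low (H : IOV v) (V : ℕ → K) (L : ℕ) (c : K) (μ : WithTop Γ)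
    (hstep : ∀ i < L, ∃ u, V (i+1) = V i + c * u ∧ μ ≤ v u) :
    ∀ i ≤ L, min (v (V 0)) (v c + μ) ≤ v (V i) := by
  intro i
  induction i with
  | zero => exact fun _ => min_le_left _ _
  | succ i ihi =>
    intro hi
    obtain ⟨u, he, hu⟩ := hstep i (by omega)
    rw [he]
    refine le_trans (le_min (ihi (by omega)) ?_) (H.ha _ _)
    rw [H.hm c u]
    exact le_trans (min_le_right _ _) (add_le_add_right hu _)

theorem chain_high (H : IOV v) (V : ℕ → K) (L : ℕ) (s : K) (hs : s = 1 ∨ s = -1)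
    (hsgn : ∀ i ≤ L, 0 ≤ s * V i)
    (hstep : ∀ i < L, ∃ w, V (i+1) = V i + w ∧ 0 ≤ s * w) :
    ∀ i ≤ L, v (V i) ≤ v (V 0) := by
  intro i
  induction i with
  | zero => exact fun _ => le_refl _
  | succ i ihi =>
    intro hi
    obtain ⟨w, he, hw⟩ := hstep i (by omega)
    refine le_trans ?_ (ihi (by omega))
    rw [← H.v_sign hs (V (i+1)), ← H.v_sign hs (V i), he, mul_add,
      H.v_add_nonneg (hsgn i (by omega)) hw]
    exact min_le_left _ _

end

section
variable {K Γ : Type*} [Field K] [LinearOrder K] [IsStrictOrderedRing K] [AddCommGroup Γ] [LinearOrder Γ] [IsOrderedAddMonoid Γ]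
  {v : K → WithTop Γ}

theorem Vc_top (P : K[X]) (σ : ℕ → ℤ) (a b : K) {d : ℕ} (hdeg : P.natDegree = d)
    (hlc : P.leadingCoeff ≠ 0) : ∀ i ≤ 2*d+1, Vc P (aaF σ a b) a b d i = P.leadingCoeff := by
  intro i hi
  rw [Vc]
  split_ifs with h
  · rw [Qseq_top P (aaF σ a b) hdeg hlc h, eval_C]
  · rw [show i - (d+1) = d - (2*d+1-i) from by omega,
      Qseq_top P (aaF σ a b) hdeg hlc (by omega), eval_C]

theorem LVL (H : IOV v) (P : K[X]) {d : ℕ} (hdeg : P.natDegree = d)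
    (a b : K) (hab : a < b) (σ : ℕ → ℤ) (hσ : ∀ k, k ≤ d → σ k = 1 ∨ σ k = -1)
    (hga : ∀ k, k < d → 0 ≤ (σ k : K) * (hasseDeriv k P).eval a)
    (hgb : ∀ k, k < d → 0 ≤ (σ k : K) * (hasseDeriv k P).eval b)
    (hlead : 0 ≤ (σ d : K) * P.leadingCoeff) (hlc : P.leadingCoeff ≠ 0) :
    ∀ t n, n + t = d → ∀ i ≤ 2*n+1,
      0 ≤ (σ n : K) * Vc P (aaF σ a b) a b n i ∧
      mF v P σ a b d n ≤ v (Vc P (aaF σ a b) a b n i) ∧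
      v (Vc P (aaF σ a b) a b n i) ≤ nuF v P σ a b d n := by
  have haaor : ∀ k, aaF σ a b k = a ∨ aaF σ a b k = b := by
    intro k
    rw [aaF]
    split_ifs with h
    · exact Or.inl rfl
    · exact Or.inr rfl
  intro t
  induction t with
  | zero =>
    intro n hn i hi
    have hnd : n = d := by omega
    subst hnd
    rw [Vc_top P σ a b hdeg hlc i hi, mF_last]
    refine ⟨hlead, ?_, ?_⟩
    · rw [nuF, if_pos rfl]
    · rw [nuF, if_pos rfl]
  | succ t ih =>
    intro n hn i hi
    have hnd : n < d := by omega
    have IH := ih (n+1) (by omega)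
    -- packaged step
    have STEP : ∀ i < 2*n+1, ∃ u,
        Vc P (aaF σ a b) a b n (i+1) = Vc P (aaF σ a b) a b n i + (b-a)*u ∧
        0 ≤ (σ (n+1) : K) * u ∧ mF v P σ a b d (n+1) ≤ v u := by
      intro i hi'
      obtain ⟨u, hu1, hu2⟩ := Vc_step P (aaF σ a b) a b haaor hi'
      rcases hu2 with rfl | ⟨i', hi'', rfl⟩
      · exact ⟨0, hu1, by rw [mul_zero], by rw [(H.h0 0).2 rfl]; exact le_top⟩
      · obtain ⟨s1, s2, s3⟩ := IH i' hi''
        exact ⟨_, hu1, s1, s2⟩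
    have hσn : (σ n : K) = 1 ∨ (σ n : K) = -1 := by
      rcases hσ n (by omega) with h | h <;> rw [h] <;> simp
    have hσn1 : (σ (n+1) : K) = 1 ∨ (σ (n+1) : K) = -1 := by
      rcases hσ (n+1) (by omega) with h | h <;> rw [h] <;> simp
    have hV0 : Vc P (aaF σ a b) a b n 0 = (hasseDeriv n P).eval a := Vc_start _ _ _ _ _
    have hVL : Vc P (aaF σ a b) a b n (2*n+1) = (hasseDeriv n P).eval b := Vc_end _ _ _ _ _
    -- sign
    have SGN : ∀ i ≤ 2*n+1, 0 ≤ (σ n : K) * Vc P (aaF σ a b) a b n i := by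
      refine chain_sign _ (2*n+1) _ _ hσn hσn1 (fun i hi' => ?_) ?_ ?_
      · obtain ⟨u, hu1, hu2, _⟩ := STEP i hi'
        refine ⟨(b-a)*u, hu1, ?_⟩
        rw [show (σ (n+1) : K) * ((b-a)*u) = (b-a) * ((σ (n+1):K) * u) from by ring]
        exact mul_nonneg (by linarith) hu2
      · rw [hV0]; exact hga n hnd
      · rw [hVL]; exact hgb n hnd
    -- case split on aa n, relating σ (n+1) and σ n
    have haan : (aaF σ a b n = a ∧ σ (n+1) = σ n) ∨ (aaF σ a b n = b ∧ σ (n+1) = -σ n) := by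
      rcases hσ n (by omega) with h1 | h1 <;> rcases hσ (n+1) (by omega) with h2 | h2 <;>
        rw [aaF] <;> rw [h1, h2] <;> norm_num
    -- backward step (for the reversed chain)
    have STEPB : ∀ i < 2*n+1, ∃ u,
        Vc P (aaF σ a b) a b n (2*n+1 - (i+1)) =
          Vc P (aaF σ a b) a b n (2*n+1 - i) + (b-a)*u ∧
        0 ≤ (-(σ (n+1) : K)) * u ∧ mF v P σ a b d (n+1) ≤ v u := by
      intro i hi'
      obtain ⟨u, hu1, hu2, hu3⟩ := STEP (2*n+1 - (i+1)) (by omega)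
      rw [show 2*n+1 - (i+1) + 1 = 2*n+1 - i from by omega] at hu1
      refine ⟨-u, by rw [hu1]; ring, by rw [neg_mul_neg]; exact hu2, by rw [H.v_neg]; exact hu3⟩
    -- low bound
    have LOWf := chain_low H _ (2*n+1) (b-a) (mF v P σ a b d (n+1))
      (fun i hi' => by obtain ⟨u, h1, _, h3⟩ := STEP i hi'; exact ⟨u, h1, h3⟩)
    have LOWb := chain_low H (fun i => Vc P (aaF σ a b) a b n (2*n+1 - i)) (2*n+1) (b-a)
      (mF v P σ a b d (n+1))
      (fun i hi' => by obtain ⟨u, h1, _, h3⟩ := STEPB i hi'; exact ⟨u, h1, h3⟩)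
    have hmrec : mF v P σ a b d n = min (nuF v P σ a b d n)
        (v (b-a) + mF v P σ a b d (n+1)) := mF_rec v P σ a b d hnd
    have hnun : nuF v P σ a b d n = v ((hasseDeriv n P).eval (aaF σ a b n)) := by
      rw [nuF, if_neg (by omega)]
    refine ⟨SGN i hi, ?_, ?_⟩
    · -- low
      rcases haan with ⟨he, _⟩ | ⟨he, _⟩
      · refine le_trans (le_of_eq ?_) (LOWf i hi)
        rw [hmrec, hnun, he, hV0]
      · have h2 := LOWb (2*n+1 - i) (by omega)
        rw [show 2*n+1 - (2*n+1 - i) = i from by omega] at h2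
        refine le_trans (le_of_eq ?_) h2
        rw [hmrec, hnun, he, show 2*n+1 - 0 = 2*n+1 from rfl, hVL]
    · -- high
      rcases haan with ⟨he, hsr⟩ | ⟨he, hsr⟩
      · have HI := chain_high H _ (2*n+1) (σ n : K) hσn SGN (fun i hi' => by
          obtain ⟨u, h1, h2, _⟩ := STEP i hi'
          refine ⟨(b-a)*u, h1, ?_⟩
          rw [show (σ n : K) * ((b-a)*u) = (b-a) * ((σ n:K) * u) from by ring]
          rw [show ((σ n : K)) = ((σ (n+1) : K)) from by rw [hsr]]
          exact mul_nonneg (by linarith) h2)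
        refine le_trans (HI i hi) (le_of_eq ?_)
        rw [hnun, he, hV0]
      · have HI := chain_high H (fun i => Vc P (aaF σ a b) a b n (2*n+1 - i)) (2*n+1)
          (σ n : K) hσn
          (fun i hi' => SGN (2*n+1 - i) (by omega))
          (fun i hi' => by
            obtain ⟨u, h1, h2, _⟩ := STEPB i hi'
            refine ⟨(b-a)*u, h1, ?_⟩
            rw [show (σ n : K) * ((b-a)*u) = (b-a) * ((σ n:K) * u) from by ring,
              show ((σ n : K)) = -((σ (n+1) : K)) from by rw [hsr]; push_cast; ring]
            exact mul_nonneg (by linarith) h2)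
        have h2 := HI (2*n+1 - i) (by omega)
        rw [show 2*n+1 - (2*n+1 - i) = i from by omega] at h2
        refine le_trans h2 (le_of_eq ?_)
        rw [hnun, he, show 2*n+1 - 0 = 2*n+1 from rfl, hVL]

end


/-- **Valuation of `P(x)` at a "unit" point of a Thom interval.**
With `ε_k = σ₀σ_k`, `a_k = a` if `ε_k ε_{k+1} = 1` and `a_k = b` otherwise,
`ν_k = v(P^[k](a_k))` (`ν_d = v(leading coefficient)`) and `δ = v(b−a)`: for every
`x` with `a < x < b` and `v(x−a) = v(b−x) = v(b−a)`,
`v(P(x)) = min( ν₀, ν₁ + δ, ν₂ + 2δ, …, ν_d + dδ )`. -/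
theorem valuation_thom_interval_unit {K Γ : Type*} [Field K] [LinearOrder K] [IsStrictOrderedRing K]
    [AddCommGroup Γ] [LinearOrder Γ] [IsOrderedAddMonoid Γ] (v : K → WithTop Γ) (hv : IsOrderedValuation v)
    (P : Polynomial K) (d : ℕ) (hd : 1 ≤ d) (hdeg : P.natDegree = d)
    (a b : K) (hab : a < b)
    (σ : ℕ → ℤ) (hσ : ∀ k, k ≤ d → σ k = 1 ∨ σ k = -1)
    (hga : ∀ k, k < d → 0 ≤ (σ k : K) * (Polynomial.hasseDeriv k P).eval a)
    (hgb : ∀ k, k < d → 0 ≤ (σ k : K) * (Polynomial.hasseDeriv k P).eval b)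
    (hlead : 0 < (σ d : K) * P.leadingCoeff)
    (x : K) (hax : a < x) (hxb : x < b)
    (h1 : v (x - a) = v (b - a)) (h2 : v (b - x) = v (b - a)) :
    v (P.eval x) =
      (Finset.range (d + 1)).inf' Finset.nonempty_range_add_one
        (fun j =>
          (if j = d then v P.leadingCoeff
           else v ((Polynomial.hasseDeriv j P).eval
              (if (σ 0 * σ j) * (σ 0 * σ (j + 1)) = 1 then a else b)))
          + j • v (b - a)) := by
  obtain ⟨hv0, hvm, hva, hvc⟩ := hv
  have H : IOV v := ⟨hv0, hvm, hva, hvc⟩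
  have hlc : P.leadingCoeff ≠ 0 := by
    intro h; rw [h, mul_zero] at hlead; exact lt_irrefl 0 hlead
  have haaor : ∀ k, aaF σ a b k = a ∨ aaF σ a b k = b := by
    intro k
    rw [aaF]
    split_ifs with h
    · exact Or.inl rfl
    · exact Or.inr rfl
  have haan : ∀ k < d, (aaF σ a b k = a ∧ σ (k+1) = σ k) ∨
      (aaF σ a b k = b ∧ σ (k+1) = -σ k) := by
    intro k hk
    rcases hσ k (by omega) with hh1 | hh1 <;> rcases hσ (k+1) (by omega) with hh2 | hh2 <;>
      rw [aaF] <;> rw [hh1, hh2] <;> norm_num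
  -- facts about the Newton coefficients
  have hQd : Qseq P (aaF σ a b) d = C P.leadingCoeff := by
    have := Qseq_top P (aaF σ a b) hdeg hlc (le_refl d)
    rwa [Nat.sub_self, hasseDeriv_zero'] at this
  have hDfacts : ∀ k ≤ d,
      0 ≤ (σ k : K) * ((Qseq P (aaF σ a b) k).eval (aaF σ a b k)) ∧
      mF v P σ a b d k ≤ v ((Qseq P (aaF σ a b) k).eval (aaF σ a b k)) ∧
      v ((Qseq P (aaF σ a b) k).eval (aaF σ a b k)) ≤ nuF v P σ a b d k := by
    intro k hk
    rcases Nat.lt_or_ge k d with hkd | hkd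
    · rcases haaor k with he | he
      · have e1 : Vc P (aaF σ a b) a b k k = (Qseq P (aaF σ a b) k).eval (aaF σ a b k) := by
          rw [Vc, if_pos (le_refl k), Nat.sub_self, hasseDeriv_zero', he]
        have := LVL H P hdeg a b hab σ hσ hga hgb hlead.le hlc (d - k) k (by omega)
          k (by omega)
        rwa [e1] at this
      · have e1 : Vc P (aaF σ a b) a b k (k+1) = (Qseq P (aaF σ a b) k).eval (aaF σ a b k) := by
          rw [Vc, if_neg (by omega), show k+1-(k+1) = 0 from by omega,
            show 2*k+1-(k+1) = k from by omega, hasseDeriv_zero', he]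
        have := LVL H P hdeg a b hab σ hσ hga hgb hlead.le hlc (d - k) k (by omega)
          (k+1) (by omega)
        rwa [e1] at this
    · have hkd' : k = d := by omega
      subst hkd'
      rw [hQd, eval_C, mF_last, nuF, if_pos rfl]
      exact ⟨hlead.le, le_refl _, le_refl _⟩
  -- Newton expansion
  have newton : ∀ nn, P.eval x =
      (∑ k ∈ range nn, (Qseq P (aaF σ a b) k).eval (aaF σ a b k) *
        ∏ j ∈ range k, (x - aaF σ a b j)) +
      (Qseq P (aaF σ a b) nn).eval x * ∏ j ∈ range nn, (x - aaF σ a b j) := by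
    intro nn
    induction nn with
    | zero => simp [Qseq]
    | succ nn ihn =>
      rw [Finset.sum_range_succ, Finset.prod_range_succ]
      have hrel : (Qseq P (aaF σ a b) nn).eval x =
          (x - aaF σ a b nn) * (Qseq P (aaF σ a b) (nn+1)).eval x +
          (Qseq P (aaF σ a b) nn).eval (aaF σ a b nn) := by
        conv_lhs => rw [Qseq_rel P (aaF σ a b) nn]
        simp
      rw [ihn, hrel]
      ring
  have keyexp : P.eval x = ∑ k ∈ range (d+1),
      (Qseq P (aaF σ a b) k).eval (aaF σ a b k) * ∏ j ∈ range k, (x - aaF σ a b j) := by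
    rw [newton d, Finset.sum_range_succ, hQd, eval_C, eval_C]
  -- sign and valuation of the products
  have pixsgn : ∀ k ≤ d, 0 < ((σ 0 : K) * (σ k : K)) * ∏ j ∈ range k, (x - aaF σ a b j) := by
    intro k
    induction k with
    | zero =>
      intro _
      rcases hσ 0 (by omega) with h | h <;> rw [h] <;> norm_num
    | succ k ihk =>
      intro hk
      rw [Finset.prod_range_succ]
      rcases haan k (by omega) with ⟨he, hsr⟩ | ⟨he, hsr⟩
      · have hc : (σ (k+1) : K) = (σ k : K) := by rw [hsr]
        rw [show ((σ 0:K) * (σ (k+1):K)) * ((∏ j ∈ range k, (x - aaF σ a b j)) * (x - aaF σ a b k))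
            = (((σ 0:K) * (σ k:K)) * ∏ j ∈ range k, (x - aaF σ a b j)) * (x - aaF σ a b k) from by
          rw [hc]; ring, he]
        exact mul_pos (ihk (by omega)) (by linarith)
      · have hc : (σ (k+1) : K) = -(σ k : K) := by
          rw [hsr]; push_cast; ring
        rw [show ((σ 0:K) * (σ (k+1):K)) * ((∏ j ∈ range k, (x - aaF σ a b j)) * (x - aaF σ a b k))
            = (((σ 0:K) * (σ k:K)) * ∏ j ∈ range k, (x - aaF σ a b j)) * (-(x - aaF σ a b k)) from by
          rw [hc]; ring, he]
        exact mul_pos (ihk (by omega)) (by linarith)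
  have pixval : ∀ k, v (∏ j ∈ range k, (x - aaF σ a b j)) = k • v (b - a) := by
    intro k
    induction k with
    | zero => rw [Finset.prod_range_zero, H.v_one, zero_smul]
    | succ k ihk =>
      rw [Finset.prod_range_succ, H.hm, ihk, succ_nsmul]
      congr 1
      rcases haaor k with he | he
      · rw [he, h1]
      · rw [he, ← h2, ← H.v_neg]
        congr 1
        ring
  -- σ₀-facts
  have hσ0 : (σ 0 : K) = 1 ∨ (σ 0 : K) = -1 := by
    rcases hσ 0 (by omega) with h | h <;> rw [h] <;> norm_num
  have hσsq : ∀ k ≤ d, (σ k : K) * (σ k : K) = 1 := by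
    intro k hk
    rcases hσ k hk with h | h <;> rw [h] <;> norm_num
  -- the same-sign sum
  have tnn : ∀ k < d+1, 0 ≤ (σ 0 : K) *
      ((Qseq P (aaF σ a b) k).eval (aaF σ a b k) * ∏ j ∈ range k, (x - aaF σ a b j)) := by
    intro k hk
    have hkk := hσsq k (by omega)
    have heq : (σ 0 : K) * ((Qseq P (aaF σ a b) k).eval (aaF σ a b k) *
        ∏ j ∈ range k, (x - aaF σ a b j)) =
        ((σ k : K) * (Qseq P (aaF σ a b) k).eval (aaF σ a b k)) *
        (((σ 0:K) * (σ k:K)) * ∏ j ∈ range k, (x - aaF σ a b j)) := by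
      linear_combination (-((Qseq P (aaF σ a b) k).eval (aaF σ a b k) *
        (∏ j ∈ range k, (x - aaF σ a b j)) * (σ 0:K))) * hkk
    rw [heq]
    exact mul_nonneg (hDfacts k (by omega)).1 (pixsgn k (by omega)).le
  have vsum := H.v_sum_nonneg
    (fun k => (σ 0 : K) * ((Qseq P (aaF σ a b) k).eval (aaF σ a b k) *
      ∏ j ∈ range k, (x - aaF σ a b j))) (d+1) tnn
  have vPx : v (P.eval x) = (range (d+1)).inf
      (fun k => v ((Qseq P (aaF σ a b) k).eval (aaF σ a b k)) + k • v (b - a)) := by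
    have e1 : v (P.eval x) = v (∑ k ∈ range (d+1), (σ 0 : K) *
        ((Qseq P (aaF σ a b) k).eval (aaF σ a b k) * ∏ j ∈ range k, (x - aaF σ a b j))) := by
      rw [← Finset.mul_sum, H.v_sign hσ0, ← keyexp]
    rw [e1, vsum]
    refine Finset.inf_congr rfl (fun k hk => ?_)
    rw [H.v_sign hσ0, H.hm, pixval k]
  -- squeeze
  have final : (range (d+1)).inf
      (fun k => v ((Qseq P (aaF σ a b) k).eval (aaF σ a b k)) + k • v (b - a)) =
      (range (d+1)).inf (fun k => nuF v P σ a b d k + k • v (b - a)) := by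
    refine le_antisymm ?_ ?_
    · refine Finset.inf_mono_fun (fun k hk => ?_)
      rw [Finset.mem_range] at hk
      exact add_le_add_left (hDfacts k (by omega)).2.2 _
    · refine Finset.le_inf (fun k hk => ?_)
      rw [Finset.mem_range] at hk
      refine le_trans (le_of_eq (mF_zero_eq v P σ a b d).symm) ?_
      refine le_trans (mF_le v P σ a b d (show k ≤ d from by omega)) ?_
      exact add_le_add_left (hDfacts k (by omega)).2.1 _
  rw [vPx, final, Finset.inf'_eq_inf]
  refine (Finset.inf_congr rfl (fun j hj => ?_)).symm
  rw [Finset.mem_range] at hj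
  congr 1
  rcases Nat.lt_or_ge j d with hjd | hjd
  · have hne : j ≠ d := by omega
    have hσ0Z : σ 0 * σ 0 = 1 := by rcases hσ 0 (by omega) with h | h <;> rw [h] <;> norm_num
    have hZ : (σ 0 * σ j) * (σ 0 * σ (j+1)) = σ j * σ (j+1) := by
      rw [show (σ 0 * σ j) * (σ 0 * σ (j+1)) = (σ 0 * σ 0) * (σ j * σ (j+1)) from by ring,
        hσ0Z, one_mul]
    simp only [nuF, aaF, if_neg hne, hZ]
  · have hje : j = d := by omega
    subst hje
    simp [nuF]
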